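/- Consider minimizing f(φ) = Σᵢ cᵢ²/φᵢ over φ with Σᵢ φᵢ = Nα₀ and αℓ ≤ φᵢ ≤ 1 for each i, where 0 < αℓ < α₀ < 1 and cᵢ > 0. Then the minimizer has the form φᵢ* = max{αℓ, min(γ cᵢ / c̄, 1)} for some γ > 0 chosen so that Σᵢ φᵢ* = Nα₀, where c̄ = N⁻¹ Σⱼ cⱼ. -/

import Mathlib

open Finset

/-- Convexity-based per-coordinate inequality: if the "gradient" condition
`0 ≤ (x - b) * (lam - c^2/b^2)` holds, then `b` beats `x` for `c^2/⬝ + lam*⬝`. -/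
lemma stmt_12_aux (c x b lam : ℝ) (hx : 0 < x) (hb : 0 < b)
    (h : 0 ≤ (x - b) * (lam - c ^ 2 / b ^ 2)) :
    c ^ 2 / b + lam * b ≤ c ^ 2 / x + lam * x := by
  have hb2 : (0:ℝ) < b ^ 2 := by positivity
  have h' : 0 ≤ (x - b) * (lam * b ^ 2 - c ^ 2) := by
    have h2 := mul_nonneg h hb2.le
    have : (x - b) * (lam - c ^ 2 / b ^ 2) * b ^ 2
        = (x - b) * (lam * b ^ 2 - c ^ 2) := by
      field_simp
    linarith [this ▸ h2]
  rw [← sub_nonneg]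
  have key : c ^ 2 / x + lam * x - (c ^ 2 / b + lam * b)
      = ((x - b) * (lam * b ^ 2 - c ^ 2) * x + c ^ 2 * (x - b) ^ 2)
        / (x * b ^ 2) := by
    field_simp
    ring
  rw [key]
  have hnum : 0 ≤ (x - b) * (lam * b ^ 2 - c ^ 2) * x + c ^ 2 * (x - b) ^ 2 :=
    add_nonneg (mul_nonneg h' hx.le) (by positivity)
  positivity

/-- KKT characterization of the box-constrained optimal sampling probabilities:
`φᵢ* = max{αℓ, min(γ cᵢ / c̄, 1)}` (with `γ` chosen so that `∑ φᵢ* = N α₀`)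
minimizes `∑ cᵢ² / φᵢ` subject to `∑ φᵢ = N α₀` and `αℓ ≤ φᵢ ≤ 1`. -/
theorem stmt_12 (N : ℕ) (hN : 1 ≤ N) (c : Fin N → ℝ) (hc : ∀ i, 0 < c i)
    (αℓ α₀ γ : ℝ) (hαℓ : 0 < αℓ) (hℓ₀ : αℓ < α₀) (h₀ : α₀ < 1) (hγ : 0 < γ) :
    let cbar : ℝ := (∑ j, c j) / N
    let φstar : Fin N → ℝ := fun i => max αℓ (min (γ * c i / cbar) 1)
    (∑ i, φstar i = N * α₀) →
    ((∀ i, αℓ ≤ φstar i ∧ φstar i ≤ 1) ∧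
      ∀ φ : Fin N → ℝ, (∀ i, αℓ ≤ φ i ∧ φ i ≤ 1) → (∑ i, φ i = N * α₀) →
        ∑ i, (c i) ^ 2 / φstar i ≤ ∑ i, (c i) ^ 2 / φ i) := by
  intro cbar φstar hsum
  have hN0 : (0:ℝ) < (N:ℝ) := by exact_mod_cast Nat.lt_of_lt_of_le Nat.zero_lt_one hN
  have hcbar : 0 < cbar := by
    have : 0 < ∑ j, c j := Finset.sum_pos (fun j _ => hc j) (by
      simpa using Finset.univ_nonempty_iff.mpr ⟨⟨0, Nat.lt_of_lt_of_le Nat.zero_lt_one hN⟩⟩)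
    exact div_pos this hN0
  have hα1 : αℓ < 1 := hℓ₀.trans h₀
  have hbox : ∀ i, αℓ ≤ φstar i ∧ φstar i ≤ 1 := fun i =>
    ⟨le_max_left _ _, max_le hα1.le (min_le_right _ _)⟩
  refine ⟨hbox, fun φ hφbox hφsum => ?_⟩
  set lam : ℝ := (cbar / γ) ^ 2 with hlam
  have hstarpos : ∀ i, 0 < φstar i := fun i => hαℓ.trans_le (hbox i).1
  have hkey : ∀ i ∈ Finset.univ,
      c i ^ 2 / φstar i + lam * φstar i ≤ c i ^ 2 / φ i + lam * φ i := by
    intro i _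
    have hφpos : 0 < φ i := hαℓ.trans_le (hφbox i).1
    apply stmt_12_aux _ _ _ _ hφpos (hstarpos i)
    set m : ℝ := γ * c i / cbar with hm
    have hmpos : 0 < m := div_pos (mul_pos hγ (hc i)) hcbar
    have hlm : lam * m ^ 2 = c i ^ 2 := by
      rw [hlam, hm]
      field_simp
    by_cases h1 : min m 1 ≤ αℓ
    · -- φstar i = αℓ, and m ≤ αℓ
      have hφs : φstar i = αℓ := max_eq_left h1
      have hmαℓ : m ≤ αℓ := by
        rcases min_le_iff.mp h1 with h | h
        · exact h
        · linarith
      have hcm : c i ^ 2 / m ^ 2 = lam := by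
        rw [← hlm]; field_simp
      have h2 : c i ^ 2 / αℓ ^ 2 ≤ lam := by
        rw [← hcm]
        apply div_le_div_of_nonneg_left (by positivity) (by positivity)
        exact pow_le_pow_left₀ hmpos.le hmαℓ 2
      have h3 : φstar i ≤ φ i := by rw [hφs]; exact (hφbox i).1
      rw [hφs]
      exact mul_nonneg (by linarith) (by linarith)
    · push_neg at h1
      have hφs : φstar i = min m 1 := max_eq_right h1.le
      by_cases h2 : m ≤ 1
      · have hφs' : φstar i = m := by rw [hφs, min_eq_left h2]
        have : lam - c i ^ 2 / φstar i ^ 2 = 0 := by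
          rw [hφs', ← hlm]
          field_simp
          ring
        rw [this, mul_zero]
      · push_neg at h2
        have hφs' : φstar i = 1 := by rw [hφs, min_eq_right h2.le]
        have hlamnn : (0:ℝ) ≤ lam := sq_nonneg _
        have h3 : lam ≤ c i ^ 2 := by
          nlinarith [mul_nonneg hlamnn (by nlinarith : (0:ℝ) ≤ m ^ 2 - 1), hlm]
        have h4 : φ i ≤ φstar i := by rw [hφs']; exact (hφbox i).2
        have : lam - c i ^ 2 / φstar i ^ 2 ≤ 0 := by
          rw [hφs']; simp; linarith
        nlinarith [this, h4]
  have hsumle := Finset.sum_le_sum hkey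
  rw [Finset.sum_add_distrib, Finset.sum_add_distrib, ← Finset.mul_sum, ← Finset.mul_sum,
    hsum, hφsum] at hsumle
  linarith
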